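/- Let B be an additive category whose idempotents split (B is idempotent complete). Let N = (⋯ → N^{j−2} → N^{j−1} →^{d^{j−1}} N^j → 0 → ⋯) be a bounded above cochain complex over B that is null-homotopic (i.e., zero in the homotopy category K(B)). Then every differential of N is a split epimorphism onto a direct summand; more precisely, N is isomorphic in the category of complexes C(B) to a direct sum of complexes of the form (Z^p →^{id} Z^p) concentrated in the two consecutive degrees p−1 and p, for suitable objects Z^p of B. -/

import Mathlib

open CategoryTheory CategoryTheory.Limits

universe v u

variable {B : Type u} [Category.{v} B] [Preadditive B] [HasZeroObject B]
  [HasFiniteBiproducts B]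

instance : HasBinaryBiproducts B := hasBinaryBiproducts_of_finite_biproducts B

/-- The direct sum, over `p : ℤ`, of the complexes `(Z p → Z p)` (with identity
differential) concentrated in degrees `p - 1` and `p`; in degree `q` it equals
`Z (q+1) ⊞ Z q`. -/
noncomputable def splitComplex (Z : ℤ → B) : CochainComplex B ℤ :=
  CochainComplex.of (fun q => Z (q + 1) ⊞ Z q)
    (fun q => biprod.fst ≫ (biprod.inr : Z (q + 1) ⟶ Z (q + 1 + 1) ⊞ Z (q + 1)))
    (fun q => by simp)

/-- Every differential of a null-homotopic bounded above complex over an idempotent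
complete additive category is a split epimorphism onto a direct summand; more
precisely, such a complex is isomorphic (in `C(B)`) to a direct sum of complexes of
the form `Z^p = Z^p` concentrated in degrees `p-1`, `p`. -/
theorem nullhomotopic_bounded_above_splits [IsIdempotentComplete B]
    (N : CochainComplex B ℤ) (j : ℤ) (hbound : ∀ p : ℤ, j < p → IsZero (N.X p))
    (hnull : Nonempty (Homotopy (𝟙 N) 0)) :
    (∀ p : ℤ, ∃ (S : B) (q : N.X p ⟶ S) (i : S ⟶ N.X (p + 1)) (r : N.X (p + 1) ⟶ S)
      (s : S ⟶ N.X p),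
      N.d p (p + 1) = q ≫ i ∧ s ≫ q = 𝟙 S ∧ i ≫ r = 𝟙 S) ∧
    ∃ Z : ℤ → B, Nonempty (N ≅ splitComplex Z) := by
  obtain ⟨H⟩ := hnull
  -- the homotopy identity in a convenient, index-generalized form
  have comm : ∀ p q r : ℤ, q = p - 1 → r = p + 1 →
      𝟙 (N.X p) = N.d p r ≫ H.hom r p + H.hom p q ≫ N.d q p := by
    intro p q r hq hr
    subst hq; subst hr
    have h := H.comm p
    rw [dNext_eq H.hom (show (ComplexShape.up ℤ).Rel p (p + 1) by simp),
        prevD_eq H.hom (show (ComplexShape.up ℤ).Rel (p - 1) p by simp)] at h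
    simpa using h
  -- `d ≫ H ≫ d = d`
  have hdhd : ∀ p r : ℤ, r = p + 1 → N.d p r ≫ H.hom r p ≫ N.d p r = N.d p r := by
    intro p r hr
    have h : N.d p r ≫ H.hom r p = 𝟙 (N.X p) - H.hom p (p - 1) ≫ N.d (p - 1) p := by
      rw [comm p (p - 1) r rfl hr]; abel
    calc N.d p r ≫ H.hom r p ≫ N.d p r
        = (N.d p r ≫ H.hom r p) ≫ N.d p r := by simp only [Category.assoc]
      _ = (𝟙 (N.X p) - H.hom p (p - 1) ≫ N.d (p - 1) p) ≫ N.d p r := by rw [h]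
      _ = N.d p r - H.hom p (p - 1) ≫ N.d (p - 1) p ≫ N.d p r := by
          simp only [Preadditive.sub_comp, Category.id_comp, Category.assoc]
      _ = N.d p r := by rw [HomologicalComplex.d_comp_d, comp_zero, sub_zero]
  -- the idempotents `H ≫ d` are idempotent
  have hbb : ∀ p q : ℤ, q = p - 1 →
      (H.hom p q ≫ N.d q p) ≫ (H.hom p q ≫ N.d q p) = H.hom p q ≫ N.d q p := by
    intro p q hq
    calc (H.hom p q ≫ N.d q p) ≫ (H.hom p q ≫ N.d q p)
        = H.hom p q ≫ (N.d q p ≫ H.hom p q ≫ N.d q p) := by simp only [Category.assoc]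
      _ = H.hom p q ≫ N.d q p := by rw [hdhd q p (by omega)]
  -- split the idempotents
  have key : ∀ p : ℤ, ∃ (Y : B) (i : Y ⟶ N.X p) (e : N.X p ⟶ Y),
      i ≫ e = 𝟙 Y ∧ e ≫ i = H.hom p (p - 1) ≫ N.d (p - 1) p :=
    fun p => IsIdempotentComplete.idempotents_split (N.X p) _ (hbb p (p - 1) rfl)
  choose Z ii ee hie hei using key
  have hei' : ∀ p q : ℤ, q = p - 1 → ee p ≫ ii p = H.hom p q ≫ N.d q p := by
    intro p q hq; subst hq; exact hei p
  -- `d ≫ e ≫ i = d`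
  have hdei : ∀ p r : ℤ, r = p + 1 → N.d p r ≫ ee r ≫ ii r = N.d p r := by
    intro p r hr
    rw [hei' r p (by omega)]
    exact hdhd p r hr
  -- `(i ≫ H) ≫ (e ≫ i) = 0`
  have hub : ∀ p r : ℤ, r = p + 1 → (ii r ≫ H.hom r p) ≫ (ee p ≫ ii p) = 0 := by
    intro p r hr
    have h : ee p ≫ ii p = 𝟙 (N.X p) - N.d p r ≫ H.hom r p := by
      rw [hei' p (p - 1) rfl, comm p (p - 1) r rfl hr]; abel
    have h2 : (ii r ≫ H.hom r p) ≫ (N.d p r ≫ H.hom r p) = ii r ≫ H.hom r p := by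
      calc (ii r ≫ H.hom r p) ≫ (N.d p r ≫ H.hom r p)
          = ii r ≫ (H.hom r p ≫ N.d p r) ≫ H.hom r p := by simp only [Category.assoc]
        _ = ii r ≫ (ee r ≫ ii r) ≫ H.hom r p := by rw [← hei' r p (by omega)]
        _ = (ii r ≫ ee r) ≫ ii r ≫ H.hom r p := by simp only [Category.assoc]
        _ = ii r ≫ H.hom r p := by rw [hie, Category.id_comp]
    rw [h, Preadditive.comp_sub, Category.comp_id, h2, sub_self]
  -- `(i ≫ H) ≫ e = 0`
  have hue : ∀ p r : ℤ, r = p + 1 → (ii r ≫ H.hom r p) ≫ ee p = 0 := by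
    intro p r hr
    calc (ii r ≫ H.hom r p) ≫ ee p
        = (ii r ≫ H.hom r p) ≫ ee p ≫ (ii p ≫ ee p) := by rw [hie, Category.comp_id]
      _ = ((ii r ≫ H.hom r p) ≫ (ee p ≫ ii p)) ≫ ee p := by simp only [Category.assoc]
      _ = 0 := by rw [hub p r hr, zero_comp]
  -- `i ≫ d = 0`
  have hid0 : ∀ p r : ℤ, r = p + 1 → ii p ≫ N.d p r = 0 := by
    intro p r hr
    calc ii p ≫ N.d p r
        = (ii p ≫ ee p) ≫ ii p ≫ N.d p r := by rw [hie, Category.id_comp]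
      _ = ii p ≫ (ee p ≫ ii p) ≫ N.d p r := by simp only [Category.assoc]
      _ = ii p ≫ (H.hom p (p - 1) ≫ N.d (p - 1) p) ≫ N.d p r := by rw [hei' p (p-1) rfl]
      _ = ii p ≫ H.hom p (p - 1) ≫ (N.d (p - 1) p ≫ N.d p r) := by
          simp only [Category.assoc]
      _ = 0 := by rw [HomologicalComplex.d_comp_d, comp_zero, comp_zero]
  -- `(i ≫ H) ≫ (d ≫ e) = 𝟙`
  have hsq : ∀ p r : ℤ, r = p + 1 →
      (ii r ≫ H.hom r p) ≫ (N.d p r ≫ ee r) = 𝟙 (Z r) := by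
    intro p r hr
    calc (ii r ≫ H.hom r p) ≫ (N.d p r ≫ ee r)
        = ii r ≫ (H.hom r p ≫ N.d p r) ≫ ee r := by simp only [Category.assoc]
      _ = ii r ≫ (ee r ≫ ii r) ≫ ee r := by rw [← hei' r p (by omega)]
      _ = (ii r ≫ ee r) ≫ (ii r ≫ ee r) := by simp only [Category.assoc]
      _ = 𝟙 (Z r) := by rw [hie]; simp
  constructor
  · -- part 1
    intro p
    refine ⟨Z (p + 1), N.d p (p + 1) ≫ ee (p + 1), ii (p + 1), ee (p + 1),
      ii (p + 1) ≫ H.hom (p + 1) p, ?_, hsq p (p + 1) rfl, hie (p + 1)⟩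
    rw [Category.assoc, hdei p (p + 1) rfl]
  · -- part 2
    refine ⟨Z, ⟨HomologicalComplex.Hom.isoOfComponents (fun p =>
      { hom := biprod.lift (N.d p (p + 1) ≫ ee (p + 1)) (ee p)
        inv := biprod.desc (ii (p + 1) ≫ H.hom (p + 1) p) (ii p)
        hom_inv_id := ?_
        inv_hom_id := ?_ }) ?_⟩⟩
    · -- hom_inv_id
      show biprod.lift (N.d p (p + 1) ≫ ee (p + 1)) (ee p) ≫
          biprod.desc (ii (p + 1) ≫ H.hom (p + 1) p) (ii p) = 𝟙 (N.X p)
      rw [biprod.lift_desc]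
      have h1 : (N.d p (p + 1) ≫ ee (p + 1)) ≫ ii (p + 1) ≫ H.hom (p + 1) p
          = N.d p (p + 1) ≫ H.hom (p + 1) p := by
        calc (N.d p (p + 1) ≫ ee (p + 1)) ≫ ii (p + 1) ≫ H.hom (p + 1) p
            = (N.d p (p + 1) ≫ ee (p + 1) ≫ ii (p + 1)) ≫ H.hom (p + 1) p := by
              simp only [Category.assoc]
          _ = N.d p (p + 1) ≫ H.hom (p + 1) p := by rw [hdei p (p + 1) rfl]
      rw [h1, hei' p (p - 1) rfl, ← comm p (p - 1) (p + 1) rfl rfl]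
    · -- inv_hom_id
      show biprod.desc (ii (p + 1) ≫ H.hom (p + 1) p) (ii p) ≫
          biprod.lift (N.d p (p + 1) ≫ ee (p + 1)) (ee p) = 𝟙 (Z (p + 1) ⊞ Z p)
      apply biprod.hom_ext'
      · apply biprod.hom_ext
        · simp only [biprod.inl_desc_assoc, Category.assoc, biprod.lift_fst,
            Category.comp_id, biprod.inl_fst]
          rw [show ii (p + 1) ≫ H.hom (p + 1) p ≫ N.d p (p + 1) ≫ ee (p + 1)
              = (ii (p + 1) ≫ H.hom (p + 1) p) ≫ (N.d p (p + 1) ≫ ee (p + 1)) by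
            simp only [Category.assoc], hsq p (p + 1) rfl]
        · simp only [biprod.inl_desc_assoc, Category.assoc, biprod.lift_snd,
            Category.comp_id, biprod.inl_snd]
          rw [← Category.assoc, hue p (p + 1) rfl]
      · apply biprod.hom_ext
        · simp only [biprod.inr_desc_assoc, Category.assoc, biprod.lift_fst,
            Category.comp_id, biprod.inr_fst]
          rw [← Category.assoc, hid0 p (p + 1) rfl, zero_comp]
        · simp [hie p]
    · -- chain map condition
      intro p q hpq
      obtain rfl : q = p + 1 := by simpa using hpq.symm
      have hofd : (splitComplex Z).d p (p + 1) =
          biprod.fst ≫ (biprod.inr : Z (p + 1) ⟶ Z (p + 1 + 1) ⊞ Z (p + 1)) :=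
        CochainComplex.of_d (fun q => Z (q + 1) ⊞ Z q)
          (fun q => biprod.fst ≫ (biprod.inr : Z (q + 1) ⟶ Z (q + 1 + 1) ⊞ Z (q + 1))) p
      rw [hofd]
      show biprod.lift (N.d p (p + 1) ≫ ee (p + 1)) (ee p) ≫
          (biprod.fst ≫ (biprod.inr : Z (p + 1) ⟶ Z (p + 1 + 1) ⊞ Z (p + 1))) =
        N.d p (p + 1) ≫ biprod.lift (N.d (p + 1) (p + 1 + 1) ≫ ee (p + 1 + 1)) (ee (p + 1))
      apply biprod.hom_ext
      · simp
      · simp
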